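/- Let Ω = (−L₁,L₁)×(−L₂,L₂)×(−L₃,L₃), mᵢ := π/(2Lᵢ), aᵢ ∈ [0,1), Xᵢ(xᵢ) := xᵢ + (aᵢ/mᵢ)cos(mᵢxᵢ), gᵢ(xᵢ) := 1 − aᵢ sin(mᵢxᵢ), kᵢ := odd multiples of mᵢ, ω := c₀√(k₁²+k₂²+k₃²), ρ(x) := ρ₀g₁g₂g₃, and c(x) := c₀√((k₁²+k₂²+k₃²)/(k₁²g₁²+k₂²g₂²+k₃²g₃²)). Then the standing wave p(x,t) = cos(ωt) sin(k₁X₁(x₁)) sin(k₂X₂(x₂)) sin(k₃X₃(x₃)) satisfies the heterogeneous acoustic wave equation (1/(ρc²)) ∂ₜ²p = ∇·((1/ρ)∇p) on Ω × ℝ. -/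

import Mathlib

private lemma aux_gpos (a m u : ℝ) (ha0 : 0 ≤ a) (ha1 : a < 1) :
    0 < 1 - a * Real.sin (m * u) := by
  nlinarith [Real.sin_le_one (m * u), Real.neg_one_le_sin (m * u),
    mul_le_mul_of_nonneg_left (Real.sin_le_one (m * u)) ha0]

private lemma aux_hasDerivAt_X (m a s : ℝ) (hm : m ≠ 0) :
    HasDerivAt (fun u : ℝ => u + (a / m) * Real.cos (m * u)) (1 - a * Real.sin (m * s)) s := by
  have h1 : HasDerivAt (fun u : ℝ => m * u) m s := by
    simpa using (hasDerivAt_id s).const_mul m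
  have h2 : HasDerivAt (fun u : ℝ => Real.cos (m * u)) (-Real.sin (m * s) * m) s :=
    (Real.hasDerivAt_cos (m * s)).comp s h1
  have h3 := (hasDerivAt_id s).add (h2.const_mul (a / m))
  refine h3.congr_deriv ?_
  field_simp
  ring

private lemma aux_hasDerivAt_sinX (m a k s : ℝ) (hm : m ≠ 0) :
    HasDerivAt (fun u : ℝ => Real.sin (k * (u + (a / m) * Real.cos (m * u))))
      (k * (1 - a * Real.sin (m * s)) *
        Real.cos (k * (s + (a / m) * Real.cos (m * s)))) s := by
  have h1 := (aux_hasDerivAt_X m a s hm).const_mul k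
  have h2 := (Real.hasDerivAt_sin (k * (s + (a / m) * Real.cos (m * s)))).comp s h1
  refine h2.congr_deriv ?_
  ring

private lemma aux_hasDerivAt_cosX (m a k s : ℝ) (hm : m ≠ 0) :
    HasDerivAt (fun u : ℝ => Real.cos (k * (u + (a / m) * Real.cos (m * u))))
      (-(k * (1 - a * Real.sin (m * s)) *
        Real.sin (k * (s + (a / m) * Real.cos (m * s))))) s := by
  have h1 := (aux_hasDerivAt_X m a s hm).const_mul k
  have h2 := (Real.hasDerivAt_cos (k * (s + (a / m) * Real.cos (m * s)))).comp s h1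
  refine h2.congr_deriv ?_
  ring

private lemma aux_time_deriv (ω A t : ℝ) :
    deriv (deriv (fun τ => Real.cos (ω * τ) * A)) t = -(ω ^ 2 * Real.cos (ω * t)) * A := by
  have h1 : ∀ s : ℝ, HasDerivAt (fun τ => Real.cos (ω * τ) * A)
      (-(ω * Real.sin (ω * s)) * A) s := by
    intro s
    have hms : HasDerivAt (fun τ : ℝ => ω * τ) ω s := by
      simpa using (hasDerivAt_id s).const_mul ω
    have := ((Real.hasDerivAt_cos (ω * s)).comp s hms).mul_const A
    refine this.congr_deriv ?_; ring
  have hfun : deriv (fun τ => Real.cos (ω * τ) * A) = fun s => -(ω * Real.sin (ω * s)) * A := by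
    funext s; exact (h1 s).deriv
  rw [hfun]
  have hms : HasDerivAt (fun τ : ℝ => ω * τ) ω t := by
    simpa using (hasDerivAt_id t).const_mul ω
  have h2 := (((Real.hasDerivAt_sin (ω * t)).comp t hms).const_mul ω).neg.mul_const A
  have h3 : HasDerivAt (fun s => -(ω * Real.sin (ω * s)) * A)
      (-(ω ^ 2 * Real.cos (ω * t)) * A) t := by
    refine h2.congr_deriv ?_
    ring
  exact h3.deriv

private lemma aux_inner_deriv (m a k B s : ℝ) (hm : m ≠ 0) :
    deriv (fun u => B * Real.sin (k * (u + (a / m) * Real.cos (m * u)))) s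
      = B * (k * (1 - a * Real.sin (m * s)) *
          Real.cos (k * (s + (a / m) * Real.cos (m * s)))) :=
  ((aux_hasDerivAt_sinX m a k s hm).const_mul B).deriv

private lemma aux_column (m a k D B s : ℝ) (hm : m ≠ 0) (ha0 : 0 ≤ a) (ha1 : a < 1)
    (hD : D ≠ 0) :
    deriv (fun u => (1 / (D * (1 - a * Real.sin (m * u)))) *
        deriv (fun v => B * Real.sin (k * (v + (a / m) * Real.cos (m * v)))) u) s
      = (1 / (D * (1 - a * Real.sin (m * s)))) *
        (-(k ^ 2 * (1 - a * Real.sin (m * s)) ^ 2) *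
          (B * Real.sin (k * (s + (a / m) * Real.cos (m * s))))) := by
  have hg : ∀ u : ℝ, (1 - a * Real.sin (m * u)) ≠ 0 := fun u => (aux_gpos a m u ha0 ha1).ne'
  have hfun : (fun u => (1 / (D * (1 - a * Real.sin (m * u)))) *
        deriv (fun v => B * Real.sin (k * (v + (a / m) * Real.cos (m * v)))) u)
      = fun u => (B * k / D) * Real.cos (k * (u + (a / m) * Real.cos (m * u))) := by
    funext u
    rw [aux_inner_deriv m a k B u hm]
    field_simp [hg u]
  rw [hfun]
  have h2 := ((aux_hasDerivAt_cosX m a k s hm).const_mul (B * k / D)).deriv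
  rw [h2]
  field_simp [hg s]

private lemma aux_alg (q c₀ g0 g1 g2 k0 k1 k2 C S0 S1 S2 : ℝ) (hq : q ≠ 0) (hc₀ : c₀ ≠ 0)
    (hg0 : g0 ≠ 0) (hg1 : g1 ≠ 0) (hg2 : g2 ≠ 0)
    (hK : k0 ^ 2 + k1 ^ 2 + k2 ^ 2 ≠ 0)
    (_hG : k0 ^ 2 * g0 ^ 2 + k1 ^ 2 * g1 ^ 2 + k2 ^ 2 * g2 ^ 2 ≠ 0) :
    1 / (q * g0 * g1 * g2 * (c₀ ^ 2 * ((k0 ^ 2 + k1 ^ 2 + k2 ^ 2) /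
        (k0 ^ 2 * g0 ^ 2 + k1 ^ 2 * g1 ^ 2 + k2 ^ 2 * g2 ^ 2)))) *
      (-(c₀ ^ 2 * (k0 ^ 2 + k1 ^ 2 + k2 ^ 2) * C) * (S0 * S1 * S2))
    = 1 / (q * g1 * g2 * g0) * (-(k0 ^ 2 * g0 ^ 2) * (C * (S1 * S2) * S0))
      + 1 / (q * g0 * g2 * g1) * (-(k1 ^ 2 * g1 ^ 2) * (C * (S0 * S2) * S1))
      + 1 / (q * g0 * g1 * g2) * (-(k2 ^ 2 * g2 ^ 2) * (C * (S0 * S1) * S2)) := by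
  field_simp
  ring

/-- Partial derivative in the i-th coordinate of a function on ℝ³. -/
noncomputable def pd (i : Fin 3) (F : (Fin 3 → ℝ) → ℝ) (x : Fin 3 → ℝ) : ℝ :=
  deriv (fun s => F (Function.update x i s)) (x i)

set_option maxHeartbeats 2000000 in
/-- The distorted standing wave satisfies the heterogeneous acoustic wave
equation (1/(ρc²)) ∂ₜ²p = ∇·((1/ρ)∇p) on Ω × ℝ. -/
theorem stmt_12 (L a : Fin 3 → ℝ) (hL : ∀ i, 0 < L i)
    (ha : ∀ i, a i ∈ Set.Ico (0 : ℝ) 1)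
    (ρ₀ c₀ : ℝ) (hρ₀ : 0 < ρ₀) (hc₀ : 0 < c₀)
    (n : Fin 3 → ℕ) :
    let m : Fin 3 → ℝ := fun i => Real.pi / (2 * L i)
    let k : Fin 3 → ℝ := fun i => (2 * (n i : ℝ) + 1) * m i
    let Xc : Fin 3 → ℝ → ℝ := fun i s => s + (a i / m i) * Real.cos (m i * s)
    let g : Fin 3 → ℝ → ℝ := fun i s => 1 - a i * Real.sin (m i * s)
    let ω : ℝ := c₀ * Real.sqrt (k 0 ^ 2 + k 1 ^ 2 + k 2 ^ 2)
    let ρ : (Fin 3 → ℝ) → ℝ := fun x => ρ₀ * g 0 (x 0) * g 1 (x 1) * g 2 (x 2)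
    let c : (Fin 3 → ℝ) → ℝ := fun x => c₀ * Real.sqrt ((k 0 ^ 2 + k 1 ^ 2 + k 2 ^ 2) /
      (k 0 ^ 2 * g 0 (x 0) ^ 2 + k 1 ^ 2 * g 1 (x 1) ^ 2 + k 2 ^ 2 * g 2 (x 2) ^ 2))
    let p : (Fin 3 → ℝ) → ℝ → ℝ := fun x t => Real.cos (ω * t) *
      (Real.sin (k 0 * Xc 0 (x 0)) * Real.sin (k 1 * Xc 1 (x 1)) * Real.sin (k 2 * Xc 2 (x 2)))
    ∀ x : Fin 3 → ℝ, (∀ i, |x i| < L i) → ∀ t : ℝ,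
      (1 / (ρ x * c x ^ 2)) * deriv (deriv (fun τ => p x τ)) t =
        ∑ i : Fin 3, pd i (fun y => (1 / ρ y) * pd i (fun z => p z t) y) x := by
  intro m k Xc g ω ρ c p x hx t
  have hmpos : ∀ i, 0 < m i := fun i => div_pos Real.pi_pos (by linarith [hL i])
  have hm : ∀ i, m i ≠ 0 := fun i => (hmpos i).ne'
  have hkpos : ∀ i, 0 < k i := fun i => by
    show (0:ℝ) < (2 * (n i : ℝ) + 1) * m i
    have := hmpos i
    positivity
  have hg : ∀ i u, (0:ℝ) < 1 - a i * Real.sin (m i * u) :=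
    fun i u => aux_gpos (a i) (m i) u (ha i).1 (ha i).2
  have hgx : ∀ i, 0 < g i (x i) := fun i => hg i (x i)
  -- time derivative
  have hT : deriv (deriv (fun τ => p x τ)) t
      = -(ω ^ 2 * Real.cos (ω * t)) * (Real.sin (k 0 * Xc 0 (x 0)) *
          Real.sin (k 1 * Xc 1 (x 1)) * Real.sin (k 2 * Xc 2 (x 2))) :=
    aux_time_deriv ω _ t
  -- spatial terms
  have h0 : pd 0 (fun y => (1 / ρ y) * pd 0 (fun z => p z t) y) x
      = (1 / ((ρ₀ * g 1 (x 1) * g 2 (x 2)) * (1 - a 0 * Real.sin (m 0 * x 0)))) *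
        (-(k 0 ^ 2 * (1 - a 0 * Real.sin (m 0 * x 0)) ^ 2) *
          ((Real.cos (ω * t) * (Real.sin (k 1 * Xc 1 (x 1)) * Real.sin (k 2 * Xc 2 (x 2)))) *
            Real.sin (k 0 * (x 0 + (a 0 / m 0) * Real.cos (m 0 * x 0))))) := by
    have e2 : ∀ u : ℝ, (fun s' => p (Function.update (Function.update x 0 u) 0 s') t)
        = fun v => (Real.cos (ω * t) *
            (Real.sin (k 1 * Xc 1 (x 1)) * Real.sin (k 2 * Xc 2 (x 2)))) *
            Real.sin (k 0 * (v + (a 0 / m 0) * Real.cos (m 0 * v))) := by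
      intro u; funext v
      unfold p Xc
      simp only [Function.update_idem, Function.update_self,
        Function.update_of_ne (show (1:Fin 3) ≠ 0 by decide),
        Function.update_of_ne (show (2:Fin 3) ≠ 0 by decide)]
      ring
    have e : (fun s => (1 / ρ (Function.update x 0 s)) *
          deriv (fun s' => p (Function.update (Function.update x 0 s) 0 s') t)
            (Function.update x 0 s 0))
        = fun u => (1 / ((ρ₀ * g 1 (x 1) * g 2 (x 2)) * (1 - a 0 * Real.sin (m 0 * u)))) *
            deriv (fun v => (Real.cos (ω * t) *
              (Real.sin (k 1 * Xc 1 (x 1)) * Real.sin (k 2 * Xc 2 (x 2)))) *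
              Real.sin (k 0 * (v + (a 0 / m 0) * Real.cos (m 0 * v)))) u := by
      funext u
      rw [e2 u, Function.update_self]
      unfold ρ g
      simp only [Function.update_self,
        Function.update_of_ne (show (1:Fin 3) ≠ 0 by decide),
        Function.update_of_ne (show (2:Fin 3) ≠ 0 by decide)]
      ring
    show deriv (fun s => (1 / ρ (Function.update x 0 s)) *
        deriv (fun s' => p (Function.update (Function.update x 0 s) 0 s') t)
          (Function.update x 0 s 0)) (x 0) = _
    rw [e, aux_column (m 0) (a 0) (k 0) (ρ₀ * g 1 (x 1) * g 2 (x 2)) _ (x 0) (hm 0)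
      (ha 0).1 (ha 0).2 (mul_pos (mul_pos hρ₀ (hgx 1)) (hgx 2)).ne']
  have h1 : pd 1 (fun y => (1 / ρ y) * pd 1 (fun z => p z t) y) x
      = (1 / ((ρ₀ * g 0 (x 0) * g 2 (x 2)) * (1 - a 1 * Real.sin (m 1 * x 1)))) *
        (-(k 1 ^ 2 * (1 - a 1 * Real.sin (m 1 * x 1)) ^ 2) *
          ((Real.cos (ω * t) * (Real.sin (k 0 * Xc 0 (x 0)) * Real.sin (k 2 * Xc 2 (x 2)))) *
            Real.sin (k 1 * (x 1 + (a 1 / m 1) * Real.cos (m 1 * x 1))))) := by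
    have e2 : ∀ u : ℝ, (fun s' => p (Function.update (Function.update x 1 u) 1 s') t)
        = fun v => (Real.cos (ω * t) *
            (Real.sin (k 0 * Xc 0 (x 0)) * Real.sin (k 2 * Xc 2 (x 2)))) *
            Real.sin (k 1 * (v + (a 1 / m 1) * Real.cos (m 1 * v))) := by
      intro u; funext v
      unfold p Xc
      simp only [Function.update_idem, Function.update_self,
        Function.update_of_ne (show (0:Fin 3) ≠ 1 by decide),
        Function.update_of_ne (show (2:Fin 3) ≠ 1 by decide)]
      ring
    have e : (fun s => (1 / ρ (Function.update x 1 s)) *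
          deriv (fun s' => p (Function.update (Function.update x 1 s) 1 s') t)
            (Function.update x 1 s 1))
        = fun u => (1 / ((ρ₀ * g 0 (x 0) * g 2 (x 2)) * (1 - a 1 * Real.sin (m 1 * u)))) *
            deriv (fun v => (Real.cos (ω * t) *
              (Real.sin (k 0 * Xc 0 (x 0)) * Real.sin (k 2 * Xc 2 (x 2)))) *
              Real.sin (k 1 * (v + (a 1 / m 1) * Real.cos (m 1 * v)))) u := by
      funext u
      rw [e2 u, Function.update_self]
      unfold ρ g
      simp only [Function.update_self,
        Function.update_of_ne (show (0:Fin 3) ≠ 1 by decide),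
        Function.update_of_ne (show (2:Fin 3) ≠ 1 by decide)]
      ring
    show deriv (fun s => (1 / ρ (Function.update x 1 s)) *
        deriv (fun s' => p (Function.update (Function.update x 1 s) 1 s') t)
          (Function.update x 1 s 1)) (x 1) = _
    rw [e, aux_column (m 1) (a 1) (k 1) (ρ₀ * g 0 (x 0) * g 2 (x 2)) _ (x 1) (hm 1)
      (ha 1).1 (ha 1).2 (mul_pos (mul_pos hρ₀ (hgx 0)) (hgx 2)).ne']
  have h2 : pd 2 (fun y => (1 / ρ y) * pd 2 (fun z => p z t) y) x
      = (1 / ((ρ₀ * g 0 (x 0) * g 1 (x 1)) * (1 - a 2 * Real.sin (m 2 * x 2)))) *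
        (-(k 2 ^ 2 * (1 - a 2 * Real.sin (m 2 * x 2)) ^ 2) *
          ((Real.cos (ω * t) * (Real.sin (k 0 * Xc 0 (x 0)) * Real.sin (k 1 * Xc 1 (x 1)))) *
            Real.sin (k 2 * (x 2 + (a 2 / m 2) * Real.cos (m 2 * x 2))))) := by
    have e2 : ∀ u : ℝ, (fun s' => p (Function.update (Function.update x 2 u) 2 s') t)
        = fun v => (Real.cos (ω * t) *
            (Real.sin (k 0 * Xc 0 (x 0)) * Real.sin (k 1 * Xc 1 (x 1)))) *
            Real.sin (k 2 * (v + (a 2 / m 2) * Real.cos (m 2 * v))) := by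
      intro u; funext v
      unfold p Xc
      simp only [Function.update_idem, Function.update_self,
        Function.update_of_ne (show (0:Fin 3) ≠ 2 by decide),
        Function.update_of_ne (show (1:Fin 3) ≠ 2 by decide)]
      ring
    have e : (fun s => (1 / ρ (Function.update x 2 s)) *
          deriv (fun s' => p (Function.update (Function.update x 2 s) 2 s') t)
            (Function.update x 2 s 2))
        = fun u => (1 / ((ρ₀ * g 0 (x 0) * g 1 (x 1)) * (1 - a 2 * Real.sin (m 2 * u)))) *
            deriv (fun v => (Real.cos (ω * t) *
              (Real.sin (k 0 * Xc 0 (x 0)) * Real.sin (k 1 * Xc 1 (x 1)))) *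
              Real.sin (k 2 * (v + (a 2 / m 2) * Real.cos (m 2 * v)))) u := by
      funext u
      rw [e2 u, Function.update_self]
      unfold ρ g
      simp only [Function.update_self,
        Function.update_of_ne (show (0:Fin 3) ≠ 2 by decide),
        Function.update_of_ne (show (1:Fin 3) ≠ 2 by decide)]
      try ring
    show deriv (fun s => (1 / ρ (Function.update x 2 s)) *
        deriv (fun s' => p (Function.update (Function.update x 2 s) 2 s') t)
          (Function.update x 2 s 2)) (x 2) = _
    rw [e, aux_column (m 2) (a 2) (k 2) (ρ₀ * g 0 (x 0) * g 1 (x 1)) _ (x 2) (hm 2)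
      (ha 2).1 (ha 2).2 (mul_pos (mul_pos hρ₀ (hgx 0)) (hgx 1)).ne']
  -- combine
  rw [Fin.sum_univ_three, hT, h0, h1, h2]
  have hKpos : 0 < k 0 ^ 2 + k 1 ^ 2 + k 2 ^ 2 := by
    have h0' := hkpos 0; positivity
  have hGpos : 0 < k 0 ^ 2 * g 0 (x 0) ^ 2 + k 1 ^ 2 * g 1 (x 1) ^ 2
      + k 2 ^ 2 * g 2 (x 2) ^ 2 := by
    have := add_pos_of_pos_of_nonneg
      (mul_pos (pow_pos (hkpos 0) 2) (pow_pos (hgx 0) 2))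
      (add_nonneg (mul_nonneg (sq_nonneg (k 1)) (sq_nonneg (g 1 (x 1))))
        (mul_nonneg (sq_nonneg (k 2)) (sq_nonneg (g 2 (x 2)))))
    linarith
  have hω2 : ω ^ 2 = c₀ ^ 2 * (k 0 ^ 2 + k 1 ^ 2 + k 2 ^ 2) := by
    show (c₀ * Real.sqrt (k 0 ^ 2 + k 1 ^ 2 + k 2 ^ 2)) ^ 2 = _
    rw [mul_pow, Real.sq_sqrt hKpos.le]
  have hc2 : c x ^ 2 = c₀ ^ 2 * ((k 0 ^ 2 + k 1 ^ 2 + k 2 ^ 2) /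
      (k 0 ^ 2 * g 0 (x 0) ^ 2 + k 1 ^ 2 * g 1 (x 1) ^ 2 + k 2 ^ 2 * g 2 (x 2) ^ 2)) := by
    show (c₀ * Real.sqrt _) ^ 2 = _
    rw [mul_pow, Real.sq_sqrt (by positivity)]
  have hρx : ρ x = ρ₀ * g 0 (x 0) * g 1 (x 1) * g 2 (x 2) := rfl
  have hXc : ∀ i, Xc i (x i) = x i + (a i / m i) * Real.cos (m i * x i) := fun i => rfl
  have hgd : ∀ i, g i (x i) = 1 - a i * Real.sin (m i * x i) := fun i => rfl
  rw [hω2, hc2, hρx, hXc 0, hXc 1, hXc 2]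
  rw [hgd 0, hgd 1, hgd 2]
  exact aux_alg ρ₀ c₀ (1 - a 0 * Real.sin (m 0 * x 0)) (1 - a 1 * Real.sin (m 1 * x 1))
    (1 - a 2 * Real.sin (m 2 * x 2)) (k 0) (k 1) (k 2) (Real.cos (ω * t)) _ _ _
    hρ₀.ne' hc₀.ne' (hg 0 (x 0)).ne' (hg 1 (x 1)).ne' (hg 2 (x 2)).ne'
    hKpos.ne' hGpos.ne'
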